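/- Let V be a variety, and let N, n and terms sᵢ, tᵢ be such that for every B ∈ V, all congruences θ, θ*, φ, φ* of B and every tuple X⃗ = (x,y,z,w,x₁,y₁,…,xₙ,yₙ) in B: if Cg(X⃗, σ(X⃗)) ⊆ θ, Cg(X⃗, σ*(X⃗)) ⊆ θ*, Cg(X⃗, ρ(X⃗)) ⊆ φ and Cg(X⃗, ρ*(X⃗)) ⊆ φ*, then (x,y) ∈ φ ∘ δ_N (such data exist whenever V has BFC). Let A = A₀ × A₁ with A₀, A₁ ∈ V. Then for all a,b ∈ A₀ and a',b',c' ∈ A₁, the following are equivalent: (i) there exists x₁ ∈ A such that for all y₁ ∈ A, …, there exists xₙ ∈ A such that for all yₙ ∈ A, Cg(X⃗, σ(X⃗)) ∩ Cg(X⃗, σ*(X⃗)) = Δ in Con(A), where X⃗ = ((a,a'),(b,b'),(a,c'),(b,c'),x₁,y₁,…,xₙ,yₙ); (ii) a' = b'. -/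

import Mathlib

set_option linter.unusedVariables false

namespace UA

/-- A purely functional first-order signature (language). -/
structure Sig where
  ops : Type
  ar : ops → ℕ

/-- An algebra over a signature: a carrier together with interpretations of
the basic operations. -/
structure Alg (S : Sig) where
  carrier : Type
  interp : ∀ f : S.ops, (Fin (S.ar f) → carrier) → carrier

/-- Terms over a signature, with variables in `V`. -/
inductive Tm (S : Sig) (V : Type) : Type
  | var : V → Tm S V
  | app : ∀ f : S.ops, (Fin (S.ar f) → Tm S V) → Tm S V

/-- Evaluation of a term in an algebra, under an assignment of the variables. -/
def Tm.eval {S : Sig} {V : Type} (A : Alg S) (v : V → A.carrier) : Tm S V → A.carrier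
  | .var i => v i
  | .app f ts => A.interp f (fun i => Tm.eval A v (ts i))

/-- An algebra satisfies an identity (a universally quantified equation between
two terms in variables `ℕ`). -/
def Alg.satisfies {S : Sig} (A : Alg S) (e : Tm S ℕ × Tm S ℕ) : Prop :=
  ∀ v : ℕ → A.carrier, Tm.eval A v e.1 = Tm.eval A v e.2

/-- Membership in the variety axiomatized by the set of equations `E`. -/
def InV {S : Sig} (E : Set (Tm S ℕ × Tm S ℕ)) (A : Alg S) : Prop :=
  ∀ e ∈ E, A.satisfies e

/-- A congruence of an algebra: an equivalence relation compatible with all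
basic operations. -/
structure Con {S : Sig} (A : Alg S) where
  rel : A.carrier → A.carrier → Prop
  refl : ∀ a, rel a a
  symm : ∀ a b, rel a b → rel b a
  trans : ∀ a b c, rel a b → rel b c → rel a c
  compat : ∀ (f : S.ops) (ts us : Fin (S.ar f) → A.carrier),
      (∀ i, rel (ts i) (us i)) → rel (A.interp f ts) (A.interp f us)

/-- The trivial (equality) congruence Δ. -/
def conDelta {S : Sig} (A : Alg S) : Con A where
  rel a b := a = b
  refl _ := rfl
  symm _ _ h := h.symm
  trans _ _ _ h₁ h₂ := h₁.trans h₂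
  compat f ts us h := congrArg (A.interp f) (funext h)

/-- The total congruence ∇. -/
def conNabla {S : Sig} (A : Alg S) : Con A where
  rel _ _ := True
  refl _ := trivial
  symm _ _ _ := trivial
  trans _ _ _ _ _ := trivial
  compat _ _ _ _ := trivial

/-- The congruence generated by a set of pairs. -/
def cg {S : Sig} {A : Alg S} (s : Set (A.carrier × A.carrier)) : Con A where
  rel a b := ∀ θ : Con A, (∀ p ∈ s, θ.rel p.1 p.2) → θ.rel a b
  refl a := fun θ _ => θ.refl a
  symm _ _ h := fun θ hs => θ.symm _ _ (h θ hs)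
  trans _ _ _ h₁ h₂ := fun θ hs => θ.trans _ _ _ (h₁ θ hs) (h₂ θ hs)
  compat f ts us h := fun θ hs => θ.compat f ts us (fun i => h i θ hs)

/-- The principal congruence generated by a pair. -/
def cgPair {S : Sig} (A : Alg S) (a b : A.carrier) : Con A := cg {(a, b)}

/-- Meet (intersection) in the congruence lattice. -/
def Con.inf {S : Sig} {A : Alg S} (θ φ : Con A) : Con A where
  rel a b := θ.rel a b ∧ φ.rel a b
  refl a := ⟨θ.refl a, φ.refl a⟩
  symm _ _ h := ⟨θ.symm _ _ h.1, φ.symm _ _ h.2⟩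
  trans _ _ _ h₁ h₂ := ⟨θ.trans _ _ _ h₁.1 h₂.1, φ.trans _ _ _ h₁.2 h₂.2⟩
  compat f ts us h :=
    ⟨θ.compat f ts us fun i => (h i).1, φ.compat f ts us fun i => (h i).2⟩

/-- Join in the congruence lattice. -/
def Con.sup {S : Sig} {A : Alg S} (θ φ : Con A) : Con A :=
  cg {p | θ.rel p.1 p.2 ∨ φ.rel p.1 p.2}

/-- Join of a family in the congruence lattice. -/
def Con.iSup {S : Sig} {A : Alg S} {ι : Type} (f : ι → Con A) : Con A :=
  cg {p | ∃ i, (f i).rel p.1 p.2}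

/-- Inclusion of congruences. -/
def conLE {S : Sig} {A : Alg S} (θ φ : Con A) : Prop := ∀ a b, θ.rel a b → φ.rel a b

/-- Relational composition `r ∘ s`. -/
def relComp {α : Type} (r s : α → α → Prop) : α → α → Prop :=
  fun a b => ∃ c, r a c ∧ s c b

/-- `θ` and `θs` are complementary factor congruences: θ ∩ θ* = Δ and θ ∘ θ* = ∇. -/
def AreCompFC {S : Sig} {A : Alg S} (θ θs : Con A) : Prop :=
  (∀ a b, θ.rel a b → θs.rel a b → a = b) ∧ (∀ a b, relComp θ.rel θs.rel a b)

/-- The set of factor congruences of an algebra. -/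
def FC {S : Sig} (A : Alg S) : Set (Con A) := {θ | ∃ θs, AreCompFC θ θs}

/-- `FC(A)` is a distributive sublattice of `Con(A)`. -/
def HasBFC {S : Sig} (A : Alg S) : Prop :=
  (∀ θ φ, θ ∈ FC A → φ ∈ FC A → θ.inf φ ∈ FC A) ∧
  (∀ θ φ, θ ∈ FC A → φ ∈ FC A → θ.sup φ ∈ FC A) ∧
  (∀ θ φ ψ, θ ∈ FC A → φ ∈ FC A → ψ ∈ FC A →
    θ.inf (φ.sup ψ) = (θ.inf φ).sup (θ.inf ψ))

/-- The variety axiomatized by `E` has Boolean factor congruences. -/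
def BFC {S : Sig} (E : Set (Tm S ℕ × Tm S ℕ)) : Prop :=
  ∀ A : Alg S, InV E A → HasBFC A

/-- Direct product of two algebras. -/
def Alg.prod {S : Sig} (A B : Alg S) : Alg S where
  carrier := A.carrier × B.carrier
  interp f xs := (A.interp f (fun i => (xs i).1), B.interp f (fun i => (xs i).2))

/-- Direct product of a family of algebras. -/
def Alg.pi {S : Sig} {ι : Type} (A : ι → Alg S) : Alg S where
  carrier := ∀ i, (A i).carrier
  interp f xs i := (A i).interp f (fun j => (xs j) i)

/-- First-order formulas over a purely functional signature, with `k` free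
variables (de Bruijn style: `all` binds a new last variable).  Negation,
conjunction, disjunction and existential quantification are definable from
`falsum`, `imp` and `all`, so this captures full first-order logic. -/
inductive Fml (S : Sig) : ℕ → Type
  | eq {k : ℕ} : Tm S (Fin k) → Tm S (Fin k) → Fml S k
  | falsum {k : ℕ} : Fml S k
  | imp {k : ℕ} : Fml S k → Fml S k → Fml S k
  | all {k : ℕ} : Fml S (k + 1) → Fml S k

/-- Tarskian satisfaction of a first-order formula in an algebra. -/
def Fml.realize {S : Sig} (A : Alg S) : ∀ {k : ℕ}, Fml S k → (Fin k → A.carrier) → Prop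
  | _, .eq t u, v => Tm.eval A v t = Tm.eval A v u
  | _, .falsum, _ => False
  | _, .imp f g, v => Fml.realize A f v → Fml.realize A g v
  | _, .all f, v => ∀ a : A.carrier, Fml.realize A f (Fin.snoc v a)

/-- A formula is preserved by direct products. -/
def PreservedByProducts {S : Sig} {l : ℕ} (φ : Fml S l) : Prop :=
  ∀ (ι : Type) (A : ι → Alg S) (v : Fin l → (Alg.pi A).carrier),
    (∀ i, φ.realize (A i) (fun m => v m i)) → φ.realize (Alg.pi A) v

/-- A formula is preserved by direct factors. -/
def PreservedByFactors {S : Sig} {l : ℕ} (φ : Fml S l) : Prop :=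
  ∀ (A B : Alg S) (v : Fin l → (A.prod B).carrier),
    φ.realize (A.prod B) v →
      φ.realize A (fun m => (v m).1) ∧ φ.realize B (fun m => (v m).2)

/-! ### Tuples `(x, y, z, w, x₁, y₁, …, xₙ, yₙ)` and the maps σ, σ*, ρ, ρ* -/

/-- The tuple `(x, y, z, w, x₁, y₁, x₂, y₂, …)` as an assignment of variables:
variable `0 ↦ x`, `1 ↦ y`, `2 ↦ z`, `3 ↦ w`, `4 + 2m ↦ xs m`, `5 + 2m ↦ ys m`. -/
def tup {α : Type} (x y z w : α) (xs ys : ℕ → α) : ℕ → α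
  | 0 => x
  | 1 => y
  | 2 => z
  | 3 => w
  | m + 4 => if m % 2 = 0 then xs (m / 2) else ys (m / 2)

/-- Extend a tuple `Fin n → α` to all of `ℕ` by a default value. -/
def extN {α : Type} {n : ℕ} (dflt : α) (f : Fin n → α) : ℕ → α :=
  fun m => if h : m < n then f ⟨m, h⟩ else dflt

/-- Evaluate a term of arity `m` at (the first `m` entries of) a tuple. -/
def evalAt {S : Sig} (A : Alg S) {m : ℕ} (u : Tm S (Fin m)) (X : ℕ → A.carrier) :
    A.carrier :=
  Tm.eval A (fun i => X i.val) u

/-- The set of pairs of corresponding components of two tuples of length `len`;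
`Cg(X⃗, Y⃗)` is `cg (tupPairs X Y len)`. -/
def tupPairs {α : Type} (X Y : ℕ → α) (len : ℕ) : Set (α × α) :=
  {p | ∃ m, m < len ∧ p = (X m, Y m)}

/-- The recursively computed `x`-row: `row j = (u j)(h1,h2,h3,h4,row 0,ys 0,…,
row (j-1), ys (j-1))`.  `recRowX A u h1 h2 h3 h4 ys j m` is the value of the row
at index `m`, computed after `j` recursion steps (only the values at `m < j`
are meaningful; later steps never change them). -/
def recRowX {S : Sig} (A : Alg S) {n : ℕ} (u : ∀ j : Fin n, Tm S (Fin (4 + 2 * j.val)))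
    (h1 h2 h3 h4 : A.carrier) (ys : ℕ → A.carrier) : ℕ → ℕ → A.carrier
  | 0, _ => h1
  | j + 1, m =>
    if m = j then
      if h : j < n then
        Tm.eval A (fun i => tup h1 h2 h3 h4 (recRowX A u h1 h2 h3 h4 ys j) ys i.val)
          (u ⟨j, h⟩)
      else h1
    else recRowX A u h1 h2 h3 h4 ys j m

/-- The recursively computed `y`-row (the `x`-row being fixed). -/
def recRowY {S : Sig} (A : Alg S) {n : ℕ} (u : ∀ j : Fin n, Tm S (Fin (4 + 2 * j.val)))
    (h1 h2 h3 h4 : A.carrier) (xs : ℕ → A.carrier) : ℕ → ℕ → A.carrier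
  | 0, _ => h1
  | j + 1, m =>
    if m = j then
      if h : j < n then
        Tm.eval A (fun i => tup h1 h2 h3 h4 xs (recRowY A u h1 h2 h3 h4 xs j) i.val)
          (u ⟨j, h⟩)
      else h1
    else recRowY A u h1 h2 h3 h4 xs j m

/-- The tuple `σ(X⃗)`: heads `(x, y, x, y)`, `y`-row unchanged, `x`-row computed
recursively by the terms `s`. -/
def sigmaT {S : Sig} (A : Alg S) {n : ℕ} (s : ∀ j : Fin n, Tm S (Fin (4 + 2 * j.val)))
    (x y z w : A.carrier) (xs ys : ℕ → A.carrier) : ℕ → A.carrier :=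
  tup x y x y (recRowX A s x y x y ys n) ys

/-- The tuple `σ*(X⃗)`: heads `(x, x, z, w)`, `y`-row unchanged, `x`-row computed
recursively by the terms `t`. -/
def sigmaStarT {S : Sig} (A : Alg S) {n : ℕ} (t : ∀ j : Fin n, Tm S (Fin (4 + 2 * j.val)))
    (x y z w : A.carrier) (xs ys : ℕ → A.carrier) : ℕ → A.carrier :=
  tup x x z w (recRowX A t x x z w ys n) ys

/-- The tuple `ρ(X⃗)`: heads `(x, y, z, z)`, `x`-row unchanged, `y`-row computed
recursively by the terms `s`. -/
def rhoT {S : Sig} (A : Alg S) {n : ℕ} (s : ∀ j : Fin n, Tm S (Fin (4 + 2 * j.val)))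
    (x y z w : A.carrier) (xs ys : ℕ → A.carrier) : ℕ → A.carrier :=
  tup x y z z xs (recRowY A s x y z z xs n)

/-- The tuple `ρ*(X⃗)`: heads `(x, y, z, w)`, `x`-row unchanged, `y`-row computed
recursively by the terms `t`. -/
def rhoStarT {S : Sig} (A : Alg S) {n : ℕ} (t : ∀ j : Fin n, Tm S (Fin (4 + 2 * j.val)))
    (x y z w : A.carrier) (xs ys : ℕ → A.carrier) : ℕ → A.carrier :=
  tup x y z w xs (recRowY A t x y z w xs n)

/-- The pair of relations `(δ_m, ε_m)` determined by congruences θ, θ*, φ, φ*: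
`δ₀ = ε₀ = Δ`, `δ_{m+1} = (θ ∘ ε_m) ∩ (θ* ∘ ε_m)`,
`ε_{m+1} = (φ ∘ δ_m) ∩ (φ* ∘ δ_m)`. -/
def deltaEps {S : Sig} {A : Alg S} (θ θs φ φs : Con A) :
    ℕ → (A.carrier → A.carrier → Prop) × (A.carrier → A.carrier → Prop)
  | 0 => (Eq, Eq)
  | m + 1 =>
    let p := deltaEps θ θs φ φs m
    (fun a b => relComp θ.rel p.2 a b ∧ relComp θs.rel p.2 a b,
     fun a b => relComp φ.rel p.1 a b ∧ relComp φs.rel p.1 a b)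

/-- Willard's congruence-theoretic condition (Corollary on Willard terms): for
every algebra in the variety, all congruences θ, θ*, φ, φ* and every tuple, if
`Cg(X⃗,σ(X⃗)) ⊆ θ`, `Cg(X⃗,σ*(X⃗)) ⊆ θ*`, `Cg(X⃗,ρ(X⃗)) ⊆ φ` and
`Cg(X⃗,ρ*(X⃗)) ⊆ φ*` then `(x, y) ∈ φ ∘ δ_N`. -/
def MalcevRelCondition {S : Sig} (E : Set (Tm S ℕ × Tm S ℕ)) (N n : ℕ)
    (s t : ∀ j : Fin n, Tm S (Fin (4 + 2 * j.val))) : Prop :=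
  ∀ A : Alg S, InV E A → ∀ θ θs φ φs : Con A,
    ∀ x y z w : A.carrier, ∀ xs ys : Fin n → A.carrier,
      conLE (cg (tupPairs (tup x y z w (extN x xs) (extN x ys))
        (sigmaT A s x y z w (extN x xs) (extN x ys)) (4 + 2 * n))) θ →
      conLE (cg (tupPairs (tup x y z w (extN x xs) (extN x ys))
        (sigmaStarT A t x y z w (extN x xs) (extN x ys)) (4 + 2 * n))) θs →
      conLE (cg (tupPairs (tup x y z w (extN x xs) (extN x ys))
        (rhoT A s x y z w (extN x xs) (extN x ys)) (4 + 2 * n))) φ →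
      conLE (cg (tupPairs (tup x y z w (extN x xs) (extN x ys))
        (rhoStarT A t x y z w (extN x xs) (extN x ys)) (4 + 2 * n))) φs →
      relComp φ.rel (deltaEps θ θs φ φs N).1 x y

/-! ### The Mal'cev condition for BFC: words and the terms `L_α`, `R_α` -/

/-- A word over the alphabet `{1, …, N}`. -/
def IsWord (N : ℕ) (α : List ℕ) : Prop := ∀ j ∈ α, 1 ≤ j ∧ j ≤ N

/-- The chain of identities associated with a word `α` (with `N = 2k`) and a
pair of tuples `Y` and `Ys` (which will be `ρ(X⃗), ρ*(X⃗)` or `σ(X⃗), σ*(X⃗)`). -/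
def ChainCond {S : Sig} (A : Alg S) {n : ℕ} (k : ℕ)
    (L R : List ℕ → Tm S (Fin (4 + 2 * n))) (α : List ℕ)
    (Y Ys : ℕ → A.carrier) : Prop :=
  evalAt A (L α) Y = evalAt A (L (α ++ [1])) Y ∧
  (∀ j, 1 ≤ j → j ≤ k - 1 →
    evalAt A (R (α ++ [j])) Y = evalAt A (L (α ++ [j + 1])) Y) ∧
  evalAt A (R (α ++ [k])) Y = evalAt A (R α) Y ∧
  evalAt A (L α) Ys = evalAt A (L (α ++ [k + 1])) Ys ∧
  (∀ j, k + 1 ≤ j → j ≤ 2 * k - 1 →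
    evalAt A (R (α ++ [j])) Ys = evalAt A (L (α ++ [j + 1])) Ys) ∧
  evalAt A (R (α ++ [2 * k])) Ys = evalAt A (R α) Ys

/-- `(N = 2k, n, s, t, L, R)` witness the BFC Mal'cev condition for the variety
axiomatized by `E`. -/
def MalcevWitness {S : Sig} (E : Set (Tm S ℕ × Tm S ℕ)) (k n : ℕ)
    (s t : ∀ j : Fin n, Tm S (Fin (4 + 2 * j.val)))
    (L R : List ℕ → Tm S (Fin (4 + 2 * n))) : Prop :=
  0 < k ∧ 0 < n ∧
  ∀ A : Alg S, InV E A → ∀ (x y z w : A.carrier) (xs ys : ℕ → A.carrier),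
    (∀ α : List ℕ, IsWord (2 * k) α → α.length = 2 * k →
      evalAt A (L α) (rhoT A s x y z w xs ys) =
        evalAt A (R α) (rhoT A s x y z w xs ys) ∧
      evalAt A (L α) (rhoStarT A t x y z w xs ys) =
        evalAt A (R α) (rhoStarT A t x y z w xs ys)) ∧
    (x = evalAt A (L []) (tup x y z w xs ys)) ∧
    (y = evalAt A (R []) (tup x y z w xs ys)) ∧
    (evalAt A (L []) (rhoT A s x y z w xs ys) =
      evalAt A (L [1]) (rhoT A s x y z w xs ys)) ∧
    (∀ j, 1 ≤ j → j ≤ 2 * k - 1 →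
      evalAt A (R [j]) (rhoT A s x y z w xs ys) =
        evalAt A (L [j + 1]) (rhoT A s x y z w xs ys)) ∧
    (evalAt A (R [2 * k]) (rhoT A s x y z w xs ys) =
      evalAt A (R []) (rhoT A s x y z w xs ys)) ∧
    (∀ α : List ℕ, IsWord (2 * k) α → α ≠ [] → α.length < 2 * k →
      α.length % 2 = 0 →
      ChainCond A k L R α (rhoT A s x y z w xs ys) (rhoStarT A t x y z w xs ys)) ∧
    (∀ α : List ℕ, IsWord (2 * k) α → α ≠ [] → α.length < 2 * k →
      α.length % 2 = 1 →
      ChainCond A k L R α (sigmaT A s x y z w xs ys) (sigmaStarT A t x y z w xs ys))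

/-! ### The formulas Ψ_m, Φ₁ and Φ₂ -/

/-- Alternating quantifier prefix `∃ u₁ ∀ v₁ … ∃ uₘ ∀ vₘ, P [u₁, v₁, …, uₘ, vₘ]`
(the accumulator collects the quantified elements in order). -/
def altQ {α : Type} (P : List α → Prop) : ℕ → List α → Prop
  | 0, acc => P acc
  | m + 1, acc => ∃ u : α, ∀ v : α, altQ P m (acc ++ [u, v])

/-- The (realization of the) formula `Ψ_m`: for every word `α` of length `m`,
if `L_{αγ} = R_{αγ}` for all nonempty `γ` with `|αγ| ≤ N`, then `L_α = R_α`. -/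
def Psi {S : Sig} (A : Alg S) {n : ℕ} (N : ℕ)
    (L R : List ℕ → Tm S (Fin (4 + 2 * n))) (m : ℕ) (X : ℕ → A.carrier) : Prop :=
  ∀ α : List ℕ, IsWord N α → α.length = m →
    ((∀ γ : List ℕ, IsWord N γ → γ ≠ [] → (α ++ γ).length ≤ N →
        evalAt A (L (α ++ γ)) X = evalAt A (R (α ++ γ)) X) →
      evalAt A (L α) X = evalAt A (R α) X)

/-- Realization of `Φ₁(x,y,z,w) = ∃y₁∀x₁ ⋯ ∃yₙ∀xₙ ⋀_{m=1}^{k} Ψ_{2m}`. -/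
def Phi1 {S : Sig} (A : Alg S) (k n : ℕ)
    (L R : List ℕ → Tm S (Fin (4 + 2 * n))) (x y z w : A.carrier) : Prop :=
  altQ (fun acc =>
    ∀ m, 1 ≤ m → m ≤ k →
      Psi A (2 * k) L R (2 * m)
        (tup x y z w (fun i => acc.getD (2 * i + 1) x) (fun i => acc.getD (2 * i) x)))
    n []

/-- Realization of `Φ₂(x,y,z,w) = ∃x₁∀y₁ ⋯ ∃xₙ∀yₙ ⋀_{m=1}^{k} Ψ_{2m-1}`. -/
def Phi2 {S : Sig} (A : Alg S) (k n : ℕ)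
    (L R : List ℕ → Tm S (Fin (4 + 2 * n))) (x y z w : A.carrier) : Prop :=
  altQ (fun acc =>
    ∀ m, 1 ≤ m → m ≤ k →
      Psi A (2 * k) L R (2 * m - 1)
        (tup x y z w (fun i => acc.getD (2 * i) x) (fun i => acc.getD (2 * i + 1) x)))
    n []

/-- `Γ^A(a,b,c,d)`: every factor congruence containing `(c,d)` contains `(a,b)`. -/
def Gamma {S : Sig} (A : Alg S) (a b c d : A.carrier) : Prop :=
  ∀ θ ∈ FC A, θ.rel c d → θ.rel a b



/-! ### Auxiliary lemmas for statement9 -/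

theorem Con.ext' {S : Sig} {A : Alg S} {θ φ : Con A}
    (h : ∀ a b, θ.rel a b ↔ φ.rel a b) : θ = φ := by
  have hr : θ.rel = φ.rel := funext fun a => funext fun b => propext (h a b)
  cases θ; cases φ; cases hr; rfl

theorem eval_prod {S : Sig} {A B : Alg S} {V : Type} (v : V → (A.prod B).carrier)
    (u : Tm S V) :
    Tm.eval (A.prod B) v u =
      (Tm.eval A (fun i => (v i).1) u, Tm.eval B (fun i => (v i).2) u) := by
  induction u with
  | var i => rfl
  | app f ts ih =>
    exact Prod.ext
      (congrArg (A.interp f) (funext fun i => congrArg Prod.fst (ih i)))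
      (congrArg (B.interp f) (funext fun i => congrArg Prod.snd (ih i)))

theorem InV_prod {S : Sig} {E : Set (Tm S ℕ × Tm S ℕ)} {A B : Alg S}
    (hA : InV E A) (hB : InV E B) : InV E (A.prod B) := by
  intro e he v
  rw [eval_prod v e.1, eval_prod v e.2, hA e he, hB e he]

def kerFst {S : Sig} (A B : Alg S) : Con (A.prod B) where
  rel u v := u.1 = v.1
  refl _ := rfl
  symm _ _ h := h.symm
  trans _ _ _ h₁ h₂ := h₁.trans h₂
  compat f ts us h := congrArg (A.interp f) (funext fun i => h i)

def kerSnd {S : Sig} (A B : Alg S) : Con (A.prod B) where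
  rel u v := u.2 = v.2
  refl _ := rfl
  symm _ _ h := h.symm
  trans _ _ _ h₁ h₂ := h₁.trans h₂
  compat f ts us h := congrArg (B.interp f) (funext fun i => h i)

theorem cg_tupPairs_le {S : Sig} {A : Alg S} {X Y : ℕ → A.carrier} {len : ℕ}
    {θ : Con A} (h : ∀ m, m < len → θ.rel (X m) (Y m)) :
    ∀ a b, (cg (tupPairs X Y len)).rel a b → θ.rel a b := by
  intro a b hab
  apply hab θ
  intro p hp
  obtain ⟨m, hm, rfl⟩ := hp
  exact h m hm

theorem tup_congr {α : Type} {x y z w : α} {r₁ r₂ ys₁ ys₂ : ℕ → α} {j : ℕ}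
    (hr : ∀ i, i < j → r₁ i = r₂ i) (hy : ∀ i, i < j → ys₁ i = ys₂ i) :
    ∀ k, k < 4 + 2 * j → tup x y z w r₁ ys₁ k = tup x y z w r₂ ys₂ k := by
  intro k hk
  match k with
  | 0 | 1 | 2 | 3 => rfl
  | (m + 4) =>
    have hm : m / 2 < j := by omega
    by_cases h : m % 2 = 0 <;> simp only [tup, h, if_true, if_false] <;>
      simp [h, hr _ hm, hy _ hm]

theorem tup_add4 {α : Type} (x y z w : α) (xs ys : ℕ → α) (m : ℕ) :
    tup x y z w xs ys (m + 4) = if m % 2 = 0 then xs (m / 2) else ys (m / 2) := rfl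

theorem recRowX_succ {S : Sig} (A : Alg S) {n : ℕ}
    (u : ∀ j : Fin n, Tm S (Fin (4 + 2 * j.val)))
    (h1 h2 h3 h4 : A.carrier) (ys : ℕ → A.carrier) (j m : ℕ) :
    recRowX A u h1 h2 h3 h4 ys (j + 1) m =
      if m = j then
        (if h : j < n then
          Tm.eval A (fun i => tup h1 h2 h3 h4 (recRowX A u h1 h2 h3 h4 ys j) ys i.val)
            (u ⟨j, h⟩)
        else h1)
      else recRowX A u h1 h2 h3 h4 ys j m := rfl

theorem recRowY_succ {S : Sig} (A : Alg S) {n : ℕ}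
    (u : ∀ j : Fin n, Tm S (Fin (4 + 2 * j.val)))
    (h1 h2 h3 h4 : A.carrier) (xs : ℕ → A.carrier) (j m : ℕ) :
    recRowY A u h1 h2 h3 h4 xs (j + 1) m =
      if m = j then
        (if h : j < n then
          Tm.eval A (fun i => tup h1 h2 h3 h4 xs (recRowY A u h1 h2 h3 h4 xs j) i.val)
            (u ⟨j, h⟩)
        else h1)
      else recRowY A u h1 h2 h3 h4 xs j m := rfl

theorem recRowX_congr {S : Sig} (A : Alg S) {n : ℕ}
    (u : ∀ j : Fin n, Tm S (Fin (4 + 2 * j.val)))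
    (h1 h2 h3 h4 : A.carrier) {ys₁ ys₂ : ℕ → A.carrier} :
    ∀ j, (∀ i, i + 1 < j → ys₁ i = ys₂ i) →
      ∀ m, recRowX A u h1 h2 h3 h4 ys₁ j m = recRowX A u h1 h2 h3 h4 ys₂ j m := by
  intro j
  induction j with
  | zero => intro _ m; rfl
  | succ j ih =>
    intro hy m
    have ih' := ih (fun i hi => hy i (by omega))
    rw [recRowX_succ, recRowX_succ]
    by_cases hm : m = j
    · rw [if_pos hm, if_pos hm]
      by_cases h : j < n
      · rw [dif_pos h, dif_pos h]
        exact congrArg (fun v => Tm.eval A v (u ⟨j, h⟩))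
          (funext fun i => tup_congr (fun i' _ => ih' i')
            (fun i' hi' => hy i' (Nat.succ_lt_succ hi')) i.val i.isLt)
      · rw [dif_neg h, dif_neg h]
    · rw [if_neg hm, if_neg hm]; exact ih' m

theorem recRowY_congr {S : Sig} (A : Alg S) {n : ℕ}
    (u : ∀ j : Fin n, Tm S (Fin (4 + 2 * j.val)))
    (h1 h2 h3 h4 : A.carrier) {xs₁ xs₂ : ℕ → A.carrier} :
    ∀ j, (∀ i, i + 1 < j → xs₁ i = xs₂ i) →
      ∀ m, recRowY A u h1 h2 h3 h4 xs₁ j m = recRowY A u h1 h2 h3 h4 xs₂ j m := by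
  intro j
  induction j with
  | zero => intro _ m; rfl
  | succ j ih =>
    intro hx m
    have ih' := ih (fun i hi => hx i (by omega))
    rw [recRowY_succ, recRowY_succ]
    by_cases hm : m = j
    · rw [if_pos hm, if_pos hm]
      by_cases h : j < n
      · rw [dif_pos h, dif_pos h]
        exact congrArg (fun v => Tm.eval A v (u ⟨j, h⟩))
          (funext fun i => tup_congr (fun i' hi' => hx i' (Nat.succ_lt_succ hi'))
            (fun i' _ => ih' i') i.val i.isLt)
      · rw [dif_neg h, dif_neg h]
    · rw [if_neg hm, if_neg hm]; exact ih' m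

theorem recRowX_stable {S : Sig} (A : Alg S) {n : ℕ}
    (u : ∀ j : Fin n, Tm S (Fin (4 + 2 * j.val)))
    (h1 h2 h3 h4 : A.carrier) (ys : ℕ → A.carrier) :
    ∀ j m, m < j → recRowX A u h1 h2 h3 h4 ys j m = recRowX A u h1 h2 h3 h4 ys (m + 1) m := by
  intro j
  induction j with
  | zero => intro m h; exact absurd h (Nat.not_lt_zero m)
  | succ j ih =>
    intro m hm
    by_cases h : m = j
    · subst h; rfl
    · rw [recRowX_succ, if_neg h]; exact ih m (by omega)

theorem recRowY_stable {S : Sig} (A : Alg S) {n : ℕ}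
    (u : ∀ j : Fin n, Tm S (Fin (4 + 2 * j.val)))
    (h1 h2 h3 h4 : A.carrier) (xs : ℕ → A.carrier) :
    ∀ j m, m < j → recRowY A u h1 h2 h3 h4 xs j m = recRowY A u h1 h2 h3 h4 xs (m + 1) m := by
  intro j
  induction j with
  | zero => intro m h; exact absurd h (Nat.not_lt_zero m)
  | succ j ih =>
    intro m hm
    by_cases h : m = j
    · subst h; rfl
    · rw [recRowY_succ, if_neg h]; exact ih m (by omega)

theorem getD_append_length {α : Type} (l : List α) (u : α) (l' : List α) (d : α) :
    (l ++ u :: l').getD l.length d = u := by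
  simp [List.getD_eq_getElem?_getD, List.getElem?_append_right (le_refl l.length)]

theorem prefix_getD {α : Type} {l l' : List α} (h : l <+: l') {i : ℕ}
    (hi : i < l.length) (d : α) : l'.getD i d = l.getD i d := by
  obtain ⟨tl, rfl⟩ := h
  exact List.getD_append _ _ _ _ hi

theorem prefix_take {α : Type} {l l' : List α} (h : l <+: l') {k : ℕ}
    (hk : k ≤ l.length) : l'.take k = l.take k := by
  obtain ⟨tl, rfl⟩ := h
  exact List.take_append_of_le_length hk

theorem getD_take {α : Type} (l : List α) {i k : ℕ} (h : i < k) (d : α) :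
    (l.take k).getD i d = l.getD i d := by
  simp [List.getD_eq_getElem?_getD, List.getElem?_take, h]

inductive Play {α : Type} (str : List α → α) : List α → Prop
  | nil : Play str []
  | snoc (acc : List α) (v : α) : Play str acc → Play str (acc ++ [str acc, v])

theorem Play.length_even {α : Type} {str : List α → α} {acc : List α}
    (h : Play str acc) : acc.length % 2 = 0 := by
  induction h with
  | nil => rfl
  | snoc acc v _ ih => simp only [List.length_append, List.length_cons, List.length_nil]; omega

theorem Play.getD_even {α : Type} {str : List α → α} {acc : List α}
    (h : Play str acc) (d : α) :
    ∀ k, 2 * k < acc.length → acc.getD (2 * k) d = str (acc.take (2 * k)) := by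
  induction h with
  | nil => intro k hk; simp at hk
  | snoc acc v hp ih =>
    intro k hk
    rcases lt_or_ge (2 * k) acc.length with h' | h'
    · rw [List.getD_append _ _ _ _ h', List.take_append_of_le_length (le_of_lt h'), ih k h']
    · have he := hp.length_even
      have hlen : (acc ++ [str acc, v]).length = acc.length + 2 := by simp
      have hkk : 2 * k = acc.length := by omega
      rw [hkk, getD_append_length, List.take_left]

theorem altQ_strategy {α : Type} (P : List α → Prop) (str : List α → α) :
    ∀ (m : ℕ) (acc : List α), Play str acc →
      (∀ acc', Play str acc' → acc <+: acc' → acc'.length = acc.length + 2 * m → P acc') →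
      altQ P m acc := by
  intro m
  induction m with
  | zero =>
    intro acc hp h
    exact h acc hp (List.prefix_refl acc) (by omega)
  | succ m ih =>
    intro acc hp h
    exact ⟨str acc, fun v => ih (acc ++ [str acc, v]) (hp.snoc acc v)
      (fun acc' hp' hpre hlen => h acc' hp'
        ((List.prefix_append acc [str acc, v]).trans hpre)
        (by simp only [List.length_append, List.length_cons, List.length_nil] at hlen ⊢; omega))⟩

theorem altQ_elim {α : Type} (P : List α → Prop) (adv : List α → α) (d : α) :
    ∀ (m : ℕ) (acc : List α), acc.length % 2 = 0 → altQ P m acc →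
      ∃ acc', acc <+: acc' ∧ acc'.length = acc.length + 2 * m ∧
        (∀ k, acc.length ≤ 2 * k + 1 → 2 * k + 1 < acc'.length →
          acc'.getD (2 * k + 1) d = adv (acc'.take (2 * k + 1))) ∧ P acc' := by
  intro m
  induction m with
  | zero =>
    intro acc he h
    exact ⟨acc, List.prefix_refl acc, by omega, fun k h1 h2 => by omega, h⟩
  | succ m ih =>
    intro acc he h
    obtain ⟨u, hu⟩ := h
    obtain ⟨acc', hpre, hlen, hadv, hP⟩ :=
      ih (acc ++ [u, adv (acc ++ [u])]) (by simp only [List.length_append,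
        List.length_cons, List.length_nil]; omega) (hu (adv (acc ++ [u])))
    have hlen2 : (acc ++ [u, adv (acc ++ [u])]).length = acc.length + 2 := by simp
    refine ⟨acc', (List.prefix_append acc _).trans hpre, by omega, ?_, hP⟩
    intro k h1 h2
    rcases lt_or_ge (2 * k + 1) (acc.length + 2) with h3 | h3
    · have hk : 2 * k + 1 = acc.length + 1 := by omega
      have h4 : acc.length + 1 < (acc ++ [u, adv (acc ++ [u])]).length := by omega
      rw [hk, prefix_getD hpre h4 d, prefix_take hpre (by omega)]
      have e1 : acc ++ [u, adv (acc ++ [u])] = (acc ++ [u]) ++ [adv (acc ++ [u])] := by simp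
      have e2 : acc.length + 1 = (acc ++ [u]).length := by simp
      rw [e1, e2, List.take_left]
      have : ((acc ++ [u]) ++ [adv (acc ++ [u])]).getD (acc ++ [u]).length d
          = adv (acc ++ [u]) := getD_append_length _ _ _ _
      rw [this]
    · exact hadv k (by omega) h2

theorem deltaEps_eq {S : Sig} {A : Alg S} {θ θs φ φs : Con A}
    (hθ : ∀ a b, θ.rel a b → θs.rel a b → a = b)
    (hφ : ∀ a b, φ.rel a b → φs.rel a b → a = b) :
    ∀ m, (∀ a b, (deltaEps θ θs φ φs m).1 a b → a = b) ∧
         (∀ a b, (deltaEps θ θs φ φs m).2 a b → a = b) := by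
  intro m
  induction m with
  | zero => exact ⟨fun a b h => h, fun a b h => h⟩
  | succ m ih =>
    constructor
    · intro a b hab
      have h' : relComp θ.rel (deltaEps θ θs φ φs m).2 a b ∧
          relComp θs.rel (deltaEps θ θs φ φs m).2 a b := hab
      obtain ⟨⟨c, hc1, hc2⟩, ⟨c', hc1', hc2'⟩⟩ := h'
      rw [ih.2 _ _ hc2] at hc1
      rw [ih.2 _ _ hc2'] at hc1'
      exact hθ _ _ hc1 hc1'
    · intro a b hab
      have h' : relComp φ.rel (deltaEps θ θs φ φs m).1 a b ∧
          relComp φs.rel (deltaEps θ θs φ φs m).1 a b := hab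
      obtain ⟨⟨c, hc1, hc2⟩, ⟨c', hc1', hc2'⟩⟩ := h'
      rw [ih.1 _ _ hc2] at hc1
      rw [ih.1 _ _ hc2'] at hc1'
      exact hφ _ _ hc1 hc1'

/-- **Corollary (infinitary definability).**  Suppose `N, n, s, t` satisfy
Willard's congruence condition on the variety (such data exist whenever the
variety has BFC).  Let `A = A₀ × A₁` with `A₀, A₁` in the variety.  Then for
`a, b ∈ A₀` and `a', b', c' ∈ A₁`:
`∃x₁∀y₁ … ∃xₙ∀yₙ, Cg(X⃗,σ(X⃗)) ∩ Cg(X⃗,σ*(X⃗)) = Δ` (with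
`X⃗ = ((a,a'),(b,b'),(a,c'),(b,c'),x₁,y₁,…,xₙ,yₙ)`) iff `a' = b'`. -/
theorem statement9 {S : Sig} (E : Set (Tm S ℕ × Tm S ℕ)) (N n : ℕ)
    (s t : ∀ j : Fin n, Tm S (Fin (4 + 2 * j.val)))
    (hW : MalcevRelCondition E N n s t)
    (A0 A1 : Alg S) (h0 : InV E A0) (h1 : InV E A1)
    (a b : A0.carrier) (a' b' c' : A1.carrier) :
    altQ (fun acc : List (Alg.prod A0 A1).carrier =>
      Con.inf
        (cg (tupPairs
          (tup ((a, a') : (Alg.prod A0 A1).carrier) (b, b') (a, c') (b, c')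
            (fun i => acc.getD (2 * i) (a, a')) (fun i => acc.getD (2 * i + 1) (a, a')))
          (sigmaT (Alg.prod A0 A1) s (a, a') (b, b') (a, c') (b, c')
            (fun i => acc.getD (2 * i) (a, a')) (fun i => acc.getD (2 * i + 1) (a, a')))
          (4 + 2 * n)))
        (cg (tupPairs
          (tup ((a, a') : (Alg.prod A0 A1).carrier) (b, b') (a, c') (b, c')
            (fun i => acc.getD (2 * i) (a, a')) (fun i => acc.getD (2 * i + 1) (a, a')))
          (sigmaStarT (Alg.prod A0 A1) t (a, a') (b, b') (a, c') (b, c')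
            (fun i => acc.getD (2 * i) (a, a')) (fun i => acc.getD (2 * i + 1) (a, a')))
          (4 + 2 * n))) =
      conDelta (Alg.prod A0 A1)) n [] ↔
    a' = b' := by
  constructor
  · -- (i) → (ii)
    intro h
    obtain ⟨acc, -, hlen, hadv, hP⟩ := altQ_elim _
      (fun acc : List (Alg.prod A0 A1).carrier =>
        ((recRowY (Alg.prod A0 A1) t (a, a') (b, b') (a, c') (b, c')
            (fun i => acc.getD (2 * i) (a, a')) (acc.length / 2 + 1) (acc.length / 2)).1,
         (recRowY (Alg.prod A0 A1) s (a, a') (b, b') (a, c') (a, c')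
            (fun i => acc.getD (2 * i) (a, a')) (acc.length / 2 + 1) (acc.length / 2)).2))
      ((a, a') : (Alg.prod A0 A1).carrier) n [] rfl h
    have hlen' : acc.length = 2 * n := by simpa using hlen
    -- Claim 2
    have claim : ∀ k, k < n →
        (recRowY (Alg.prod A0 A1) s (a, a') (b, b') (a, c') (a, c')
          (fun i => acc.getD (2 * i) (a, a')) n k).2 = (acc.getD (2 * k + 1) (a, a')).2 ∧
        (recRowY (Alg.prod A0 A1) t (a, a') (b, b') (a, c') (b, c')
          (fun i => acc.getD (2 * i) (a, a')) n k).1 = (acc.getD (2 * k + 1) (a, a')).1 := by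
      intro k hk
      have hlt : (acc.take (2 * k + 1)).length = 2 * k + 1 := by
        rw [List.length_take]; omega
      have hdiv : (2 * k + 1) / 2 = k := by omega
      have e1 : acc.getD (2 * k + 1) ((a, a') : (Alg.prod A0 A1).carrier) =
          ((recRowY (Alg.prod A0 A1) t (a, a') (b, b') (a, c') (b, c')
              (fun i => (acc.take (2 * k + 1)).getD (2 * i) (a, a')) (k + 1) k).1,
           (recRowY (Alg.prod A0 A1) s (a, a') (b, b') (a, c') (a, c')
              (fun i => (acc.take (2 * k + 1)).getD (2 * i) (a, a')) (k + 1) k).2) := by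
        rw [hadv k (by simp) (by omega)]
        rw [hlt, hdiv]
      have hagree : ∀ i, i + 1 < k + 1 →
          (fun i => acc.getD (2 * i) ((a, a') : (Alg.prod A0 A1).carrier)) i =
          (fun i => (acc.take (2 * k + 1)).getD (2 * i) ((a, a') : (Alg.prod A0 A1).carrier)) i := by
        intro i hi
        exact (getD_take acc (by omega) _).symm
      constructor
      · rw [recRowY_stable (Alg.prod A0 A1) s (a, a') (b, b') (a, c') (a, c')
              (fun i => acc.getD (2 * i) (a, a')) n k hk,
            recRowY_congr (Alg.prod A0 A1) s (a, a') (b, b') (a, c') (a, c')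
              (k + 1) hagree k, e1]
      · rw [recRowY_stable (Alg.prod A0 A1) t (a, a') (b, b') (a, c') (b, c')
              (fun i => acc.getD (2 * i) (a, a')) n k hk,
            recRowY_congr (Alg.prod A0 A1) t (a, a') (b, b') (a, c') (b, c')
              (k + 1) hagree k, e1]
    -- abbreviations for the four congruences
    have hxsext : extN ((a, a') : (Alg.prod A0 A1).carrier)
        (fun i : Fin n => acc.getD (2 * i.val) (a, a')) =
        fun i => acc.getD (2 * i) (a, a') := by
      funext m
      unfold extN
      by_cases hm : m < n
      · exact dif_pos hm
      · exact (dif_neg hm).trans (List.getD_eq_default _ _ (hlen'.trans_le (by omega))).symm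
    have hysext : extN ((a, a') : (Alg.prod A0 A1).carrier)
        (fun i : Fin n => acc.getD (2 * i.val + 1) (a, a')) =
        fun i => acc.getD (2 * i + 1) (a, a') := by
      funext m
      unfold extN
      by_cases hm : m < n
      · exact dif_pos hm
      · exact (dif_neg hm).trans (List.getD_eq_default _ _ (hlen'.trans_le (by omega))).symm
    have hres := hW (Alg.prod A0 A1) (InV_prod h0 h1)
      (cg (tupPairs
        (tup ((a, a') : (Alg.prod A0 A1).carrier) (b, b') (a, c') (b, c')
          (fun i => acc.getD (2 * i) (a, a')) (fun i => acc.getD (2 * i + 1) (a, a')))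
        (sigmaT (Alg.prod A0 A1) s (a, a') (b, b') (a, c') (b, c')
          (fun i => acc.getD (2 * i) (a, a')) (fun i => acc.getD (2 * i + 1) (a, a')))
        (4 + 2 * n)))
      (cg (tupPairs
        (tup ((a, a') : (Alg.prod A0 A1).carrier) (b, b') (a, c') (b, c')
          (fun i => acc.getD (2 * i) (a, a')) (fun i => acc.getD (2 * i + 1) (a, a')))
        (sigmaStarT (Alg.prod A0 A1) t (a, a') (b, b') (a, c') (b, c')
          (fun i => acc.getD (2 * i) (a, a')) (fun i => acc.getD (2 * i + 1) (a, a')))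
        (4 + 2 * n)))
      (cg (tupPairs
        (tup ((a, a') : (Alg.prod A0 A1).carrier) (b, b') (a, c') (b, c')
          (fun i => acc.getD (2 * i) (a, a')) (fun i => acc.getD (2 * i + 1) (a, a')))
        (rhoT (Alg.prod A0 A1) s (a, a') (b, b') (a, c') (b, c')
          (fun i => acc.getD (2 * i) (a, a')) (fun i => acc.getD (2 * i + 1) (a, a')))
        (4 + 2 * n)))
      (cg (tupPairs
        (tup ((a, a') : (Alg.prod A0 A1).carrier) (b, b') (a, c') (b, c')
          (fun i => acc.getD (2 * i) (a, a')) (fun i => acc.getD (2 * i + 1) (a, a')))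
        (rhoStarT (Alg.prod A0 A1) t (a, a') (b, b') (a, c') (b, c')
          (fun i => acc.getD (2 * i) (a, a')) (fun i => acc.getD (2 * i + 1) (a, a')))
        (4 + 2 * n)))
      (a, a') (b, b') (a, c') (b, c')
      (fun i : Fin n => acc.getD (2 * i.val) (a, a'))
      (fun i : Fin n => acc.getD (2 * i.val + 1) (a, a'))
      (by erw [hxsext, hysext]; exact fun u v hh => hh)
      (by erw [hxsext, hysext]; exact fun u v hh => hh)
      (by erw [hxsext, hysext]; exact fun u v hh => hh)
      (by erw [hxsext, hysext]; exact fun u v hh => hh)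
    obtain ⟨c, hc1, hc2⟩ := hres
    have hθΔ : ∀ u v,
        (cg (tupPairs
          (tup ((a, a') : (Alg.prod A0 A1).carrier) (b, b') (a, c') (b, c')
            (fun i => acc.getD (2 * i) (a, a')) (fun i => acc.getD (2 * i + 1) (a, a')))
          (sigmaT (Alg.prod A0 A1) s (a, a') (b, b') (a, c') (b, c')
            (fun i => acc.getD (2 * i) (a, a')) (fun i => acc.getD (2 * i + 1) (a, a')))
          (4 + 2 * n))).rel u v →
        (cg (tupPairs
          (tup ((a, a') : (Alg.prod A0 A1).carrier) (b, b') (a, c') (b, c')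
            (fun i => acc.getD (2 * i) (a, a')) (fun i => acc.getD (2 * i + 1) (a, a')))
          (sigmaStarT (Alg.prod A0 A1) t (a, a') (b, b') (a, c') (b, c')
            (fun i => acc.getD (2 * i) (a, a')) (fun i => acc.getD (2 * i + 1) (a, a')))
          (4 + 2 * n))).rel u v → u = v := by
      intro u v h1 h2
      have h3 : (conDelta (Alg.prod A0 A1)).rel u v := by
        rw [← hP]; exact ⟨h1, h2⟩
      exact h3
    have hφ2 : ∀ u v,
        (cg (tupPairs
          (tup ((a, a') : (Alg.prod A0 A1).carrier) (b, b') (a, c') (b, c')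
            (fun i => acc.getD (2 * i) (a, a')) (fun i => acc.getD (2 * i + 1) (a, a')))
          (rhoT (Alg.prod A0 A1) s (a, a') (b, b') (a, c') (b, c')
            (fun i => acc.getD (2 * i) (a, a')) (fun i => acc.getD (2 * i + 1) (a, a')))
          (4 + 2 * n))).rel u v → u.2 = v.2 := by
      refine cg_tupPairs_le (θ := kerSnd A0 A1) ?_
      intro m hm
      match m with
      | 0 => exact rfl
      | 1 => exact rfl
      | 2 => exact rfl
      | 3 => exact rfl
      | (k + 4) =>
        show (tup ((a, a') : (Alg.prod A0 A1).carrier) (b, b') (a, c') (b, c')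
            (fun i => acc.getD (2 * i) (a, a')) (fun i => acc.getD (2 * i + 1) (a, a')) (k + 4)).2 =
          (tup ((a, a') : (Alg.prod A0 A1).carrier) (b, b') (a, c') (a, c')
            (fun i => acc.getD (2 * i) (a, a'))
            (recRowY (Alg.prod A0 A1) s (a, a') (b, b') (a, c') (a, c')
              (fun i => acc.getD (2 * i) (a, a')) n) (k + 4)).2
        erw [tup_add4, tup_add4]
        by_cases hk : k % 2 = 0
        · erw [if_pos hk, if_pos hk]
        · erw [if_neg hk, if_neg hk]
          exact ((claim (k / 2) (by omega)).1).symm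
    have hφs1 : ∀ u v,
        (cg (tupPairs
          (tup ((a, a') : (Alg.prod A0 A1).carrier) (b, b') (a, c') (b, c')
            (fun i => acc.getD (2 * i) (a, a')) (fun i => acc.getD (2 * i + 1) (a, a')))
          (rhoStarT (Alg.prod A0 A1) t (a, a') (b, b') (a, c') (b, c')
            (fun i => acc.getD (2 * i) (a, a')) (fun i => acc.getD (2 * i + 1) (a, a')))
          (4 + 2 * n))).rel u v → u.1 = v.1 := by
      refine cg_tupPairs_le (θ := kerFst A0 A1) ?_
      intro m hm
      match m with
      | 0 => exact rfl
      | 1 => exact rfl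
      | 2 => exact rfl
      | 3 => exact rfl
      | (k + 4) =>
        show (tup ((a, a') : (Alg.prod A0 A1).carrier) (b, b') (a, c') (b, c')
            (fun i => acc.getD (2 * i) (a, a')) (fun i => acc.getD (2 * i + 1) (a, a')) (k + 4)).1 =
          (tup ((a, a') : (Alg.prod A0 A1).carrier) (b, b') (a, c') (b, c')
            (fun i => acc.getD (2 * i) (a, a'))
            (recRowY (Alg.prod A0 A1) t (a, a') (b, b') (a, c') (b, c')
              (fun i => acc.getD (2 * i) (a, a')) n) (k + 4)).1
        erw [tup_add4, tup_add4]
        by_cases hk : k % 2 = 0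
        · erw [if_pos hk, if_pos hk]
        · erw [if_neg hk, if_neg hk]
          exact ((claim (k / 2) (by omega)).2).symm
    have hφΔ : ∀ u v, _ → _ → u = v := fun u v h1 h2 =>
      Prod.ext (hφs1 u v h2) (hφ2 u v h1)
    have hδ := (deltaEps_eq hθΔ hφΔ N).1 _ _ hc2
    rw [hδ] at hc1
    exact hφ2 _ _ hc1
  · -- (ii) → (i)
    intro hab
    subst hab
    apply altQ_strategy _
      (fun acc : List (Alg.prod A0 A1).carrier =>
        ((recRowX (Alg.prod A0 A1) s (a, a') (b, a') (a, a') (b, a')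
            (fun i => acc.getD (2 * i + 1) (a, a')) (acc.length / 2 + 1) (acc.length / 2)).1,
         (recRowX (Alg.prod A0 A1) t (a, a') (a, a') (a, c') (b, c')
            (fun i => acc.getD (2 * i + 1) (a, a')) (acc.length / 2 + 1) (acc.length / 2)).2))
      n [] Play.nil
    intro acc hp hpre hlen
    have hlen' : acc.length = 2 * n := by simpa using hlen
    have claim : ∀ k, k < n →
        (recRowX (Alg.prod A0 A1) s (a, a') (b, a') (a, a') (b, a')
          (fun i => acc.getD (2 * i + 1) (a, a')) n k).1 = (acc.getD (2 * k) (a, a')).1 ∧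
        (recRowX (Alg.prod A0 A1) t (a, a') (a, a') (a, c') (b, c')
          (fun i => acc.getD (2 * i + 1) (a, a')) n k).2 = (acc.getD (2 * k) (a, a')).2 := by
      intro k hk
      have hlt : (acc.take (2 * k)).length = 2 * k := by
        rw [List.length_take]; omega
      have hdiv : (2 * k) / 2 = k := by omega
      have e1 : acc.getD (2 * k) ((a, a') : (Alg.prod A0 A1).carrier) =
          ((recRowX (Alg.prod A0 A1) s (a, a') (b, a') (a, a') (b, a')
              (fun i => (acc.take (2 * k)).getD (2 * i + 1) (a, a')) (k + 1) k).1,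
           (recRowX (Alg.prod A0 A1) t (a, a') (a, a') (a, c') (b, c')
              (fun i => (acc.take (2 * k)).getD (2 * i + 1) (a, a')) (k + 1) k).2) := by
        erw [hp.getD_even _ k (by omega)]
        erw [hlt, hdiv]
      have hagree : ∀ i, i + 1 < k + 1 →
          (fun i => acc.getD (2 * i + 1) ((a, a') : (Alg.prod A0 A1).carrier)) i =
          (fun i => (acc.take (2 * k)).getD (2 * i + 1) ((a, a') : (Alg.prod A0 A1).carrier)) i := by
        intro i hi
        exact (getD_take acc (by omega) _).symm
      constructor
      · rw [recRowX_stable (Alg.prod A0 A1) s (a, a') (b, a') (a, a') (b, a')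
              (fun i => acc.getD (2 * i + 1) (a, a')) n k hk,
            recRowX_congr (Alg.prod A0 A1) s (a, a') (b, a') (a, a') (b, a')
              (k + 1) hagree k, e1]
      · rw [recRowX_stable (Alg.prod A0 A1) t (a, a') (a, a') (a, c') (b, c')
              (fun i => acc.getD (2 * i + 1) (a, a')) n k hk,
            recRowX_congr (Alg.prod A0 A1) t (a, a') (a, a') (a, c') (b, c')
              (k + 1) hagree k, e1]
    apply Con.ext'
    intro u v
    constructor
    · intro huv
      obtain ⟨h1, h2⟩ := huv
      refine Prod.ext ?_ ?_
      · refine cg_tupPairs_le (θ := kerFst A0 A1) ?_ u v h1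
        intro m hm
        match m with
        | 0 => exact rfl
        | 1 => exact rfl
        | 2 => exact rfl
        | 3 => exact rfl
        | (k + 4) =>
          show (tup ((a, a') : (Alg.prod A0 A1).carrier) (b, a') (a, c') (b, c')
              (fun i => acc.getD (2 * i) (a, a')) (fun i => acc.getD (2 * i + 1) (a, a')) (k + 4)).1 =
            (tup ((a, a') : (Alg.prod A0 A1).carrier) (b, a') (a, a') (b, a')
              (recRowX (Alg.prod A0 A1) s (a, a') (b, a') (a, a') (b, a')
                (fun i => acc.getD (2 * i + 1) (a, a')) n)
              (fun i => acc.getD (2 * i + 1) (a, a')) (k + 4)).1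
          erw [tup_add4, tup_add4]
          by_cases hk : k % 2 = 0
          · erw [if_pos hk, if_pos hk]
            exact ((claim (k / 2) (by omega)).1).symm
          · erw [if_neg hk, if_neg hk]
      · refine cg_tupPairs_le (θ := kerSnd A0 A1) ?_ u v h2
        intro m hm
        match m with
        | 0 => exact rfl
        | 1 => exact rfl
        | 2 => exact rfl
        | 3 => exact rfl
        | (k + 4) =>
          show (tup ((a, a') : (Alg.prod A0 A1).carrier) (b, a') (a, c') (b, c')
              (fun i => acc.getD (2 * i) (a, a')) (fun i => acc.getD (2 * i + 1) (a, a')) (k + 4)).2 =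
            (tup ((a, a') : (Alg.prod A0 A1).carrier) (a, a') (a, c') (b, c')
              (recRowX (Alg.prod A0 A1) t (a, a') (a, a') (a, c') (b, c')
                (fun i => acc.getD (2 * i + 1) (a, a')) n)
              (fun i => acc.getD (2 * i + 1) (a, a')) (k + 4)).2
          erw [tup_add4, tup_add4]
          by_cases hk : k % 2 = 0
          · erw [if_pos hk, if_pos hk]
            exact ((claim (k / 2) (by omega)).2).symm
          · erw [if_neg hk, if_neg hk]
    · intro huv
      have h' : u = v := huv
      subst h'
      exact (Con.inf _ _).refl u


end UA
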